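/- Let M be a commutative additive monoid, a ∈ M, and m a positive integer. Then sr(a) ≤ m · sr(m·a), with the convention m · ∞ = ∞. -/
import Mathlib


/-- `a` satisfies the `n`-stable rank condition in `M`. -/
def SRCond {M : Type*} [AddCommMonoid M] (a : M) (n : ℕ) : Prop :=
  ∀ x y : M, n • a + x = a + y → ∃ e : M, n • a = a + e ∧ e + x = y

/-- The stable rank of `a`: the least positive integer `n` such that `a` satisfies
the `n`-stable rank condition, or `∞` if no such `n` exists. -/
noncomputable def sr {M : Type*} [AddCommMonoid M] (a : M) : ℕ∞ :=
  sInf {n : ℕ∞ | ∃ m : ℕ, 0 < m ∧ SRCond a m ∧ n = (m : ℕ∞)}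

lemma srcond_mul {M : Type*} [AddCommMonoid M] (a : M) (m n : ℕ) (hm : 0 < m)
    (h : SRCond (m • a) n) : SRCond a (m * n) := by
  intro x y hxy
  obtain ⟨k, hk⟩ := Nat.exists_eq_add_of_lt hm
  -- m = k + 1
  have hm' : m = k + 1 := by omega
  subst hm'
  have key : n • ((k + 1) • a) + (x + k • a) = (k + 1) • a + y := by
    have : ((k + 1) * n) • a + x + k • a = a + y + k • a := by rw [hxy]
    calc n • ((k + 1) • a) + (x + k • a)
        = ((k + 1) * n) • a + x + k • a := by
          rw [← smul_smul, smul_comm]; abel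
      _ = a + y + k • a := this
      _ = (k + 1) • a + y := by rw [add_smul, one_smul]; abel
  obtain ⟨e, he1, he2⟩ := h (x + k • a) y key
  refine ⟨e + k • a, ?_, ?_⟩
  · calc ((k + 1) * n) • a = n • ((k + 1) • a) := by rw [← smul_smul, smul_comm]
      _ = (k + 1) • a + e := he1
      _ = a + (e + k • a) := by rw [add_smul, one_smul]; abel
  · calc e + k • a + x = e + (x + k • a) := by abel
      _ = y := he2

theorem stmt_9 {M : Type*} [AddCommMonoid M] (a : M) (m : ℕ) (hm : 0 < m) :
    sr a ≤ (m : ℕ∞) * sr (m • a) := by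
  by_cases hS : {n : ℕ∞ | ∃ k : ℕ, 0 < k ∧ SRCond (m • a) k ∧ n = (k : ℕ∞)}.Nonempty
  · obtain ⟨k, hk, hcond, heq⟩ := csInf_mem hS
    have hsr : sr (m • a) = (k : ℕ∞) := heq
    rw [hsr, ← Nat.cast_mul]
    refine sInf_le ⟨m * k, ?_, srcond_mul a m k hm hcond, rfl⟩
    positivity
  · have : sr (m • a) = ⊤ := by
      rw [sr, Set.not_nonempty_iff_eq_empty.mp hS, sInf_empty]
    rw [this, ENat.mul_top (by exact_mod_cast hm.ne')]
    exact le_top
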